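/- Let F be a field, q_1,…,q_n nonzero pairwise distinct elements of F, χ_1,…,χ_n ∈ F, and ħ ∈ F. Let M(χ) be the n×n matrix over F with entries M(χ)_{ii} = χ_i and M(χ)_{ij} = ħ/(1 − q_i/q_j) for i ≠ j. Define E_1(χ),…,E_n(χ) ∈ F by the identity of polynomials det(y·I_n + M(χ)) = y^n + E_1(χ) y^{n−1} + ⋯ + E_{n−1}(χ) y + E_n(χ) in F[y]. Then for every 1 ≤ k ≤ n, E_k(χ) equals the sum, over all k-element subsets K of {1,…,n} and all matchings π of K, of J(π)·V(π). -/

import Mathlib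

open Finset Equiv

namespace CombForEk

variable {E : Type*} [Field E] {n : ℕ}

noncomputable def ment (Q χ : Fin n → E) (hb : E) (x y : Fin n) : E :=
  if x = y then χ x else hb / (1 - Q x / Q y)

noncomputable def wgt (Q : Fin n → E) (hb : E) (i j : Fin n) : E :=
  hb ^ 2 * Q i * Q j / (Q i - Q j) ^ 2

variable {Q χ : Fin n → E} {hb : E}

lemma sub_ne (hQ0 : ∀ i, Q i ≠ 0) (hQ : Function.Injective Q) {i j : Fin n} (h : i ≠ j) :
    1 - Q i / Q j ≠ 0 := by
  have hj := hQ0 j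
  rw [sub_ne_zero]
  intro he
  apply h
  apply hQ
  field_simp at he
  rw [he]

lemma ment_diag (x : Fin n) : ment Q χ hb x x = χ x := if_pos rfl

lemma ment_ne {x y : Fin n} (h : x ≠ y) : ment Q χ hb x y = hb / (1 - Q x / Q y) := if_neg h

lemma qsub_ne (hQ0 : ∀ i, Q i ≠ 0) (hQ : Function.Injective Q) {i j : Fin n} (h : i ≠ j) :
    Q j - Q i ≠ 0 := sub_ne_zero.2 fun e => h (hQ e.symm)

lemma ment_ne' (hQ0 : ∀ i, Q i ≠ 0) (hQ : Function.Injective Q) {x y : Fin n} (h : x ≠ y) :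
    ment Q χ hb x y = hb * Q y / (Q y - Q x) := by
  rw [ment_ne h]
  have h1 := hQ0 y
  have h2 := qsub_ne hQ0 hQ h
  rw [div_eq_div_iff (sub_ne hQ0 hQ h) h2]
  field_simp

lemma F2 (hQ0 : ∀ i, Q i ≠ 0) (hQ : Function.Injective Q) {t j : Fin n} (h : t ≠ j) :
    ment Q χ hb t j * ment Q χ hb j t = -(wgt Q hb t j) := by
  rw [ment_ne' hQ0 hQ h, ment_ne' hQ0 hQ h.symm, wgt]
  have h2 := qsub_ne hQ0 hQ h
  have h3 := qsub_ne hQ0 hQ h.symm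
  have h4 : Q t - Q j ≠ 0 := h3
  field_simp
  ring

lemma F3 (hQ0 : ∀ i, Q i ≠ 0) (hQ : Function.Injective Q) {i t j : Fin n}
    (hit : i ≠ t) (htj : t ≠ j) (hij : i ≠ j) :
    ment Q χ hb i t * ment Q χ hb t j =
      ment Q χ hb i j * (ment Q χ hb i t + Q t / Q j * ment Q χ hb t j) := by
  rw [ment_ne' hQ0 hQ hit, ment_ne' hQ0 hQ htj, ment_ne' hQ0 hQ hij]
  have h1 := qsub_ne hQ0 hQ hit
  have h2 := qsub_ne hQ0 hQ htj
  have h3 := qsub_ne hQ0 hQ hij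
  have h4 := hQ0 j
  have h5 := hQ0 t
  have h6 := hQ0 i
  field_simp
  ring

lemma F4 (hQ0 : ∀ i, Q i ≠ 0) (hQ : Function.Injective Q) {i t : Fin n} (h : i ≠ t) :
    ment Q χ hb i t + Q t / Q i * ment Q χ hb t i = 0 := by
  rw [ment_ne' hQ0 hQ h, ment_ne' hQ0 hQ h.symm]
  have h1 := qsub_ne hQ0 hQ h
  have h2 := qsub_ne hQ0 hQ h.symm
  have h6 := hQ0 i
  field_simp
  ring

lemma wgt_symm (i j : Fin n) : wgt Q hb i j = wgt Q hb j i := by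
  rw [wgt, wgt]
  rcases eq_or_ne (Q i) (Q j) with h | h
  · rw [h]
  · have h1 : Q i - Q j ≠ 0 := sub_ne_zero.2 h
    have h2 : Q j - Q i ≠ 0 := sub_ne_zero.2 (Ne.symm h)
    rw [div_eq_div_iff (pow_ne_zero 2 h1) (pow_ne_zero 2 h2)]
    ring

noncomputable def sgn (σ : Equiv.Perm (Fin n)) : E := ((Equiv.Perm.sign σ : ℤ) : E)

variable {Q χ : Fin n → E} {hb : E}

lemma sgn_swap_mul {x y : Fin n} (h : x ≠ y) (τ : Equiv.Perm (Fin n)) :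
    (sgn (Equiv.swap x y * τ) : E) = -sgn τ := by
  simp [sgn, Equiv.Perm.sign_swap h]

lemma moved_mem {s : Finset (Fin n)} {σ : Equiv.Perm (Fin n)} (hσ : ∀ i ∉ s, σ i = i)
    {x : Fin n} (hx : σ x ≠ x) : x ∈ s := by
  by_contra h; exact hx (hσ x h)

lemma moved_map_mem {s : Finset (Fin n)} {σ : Equiv.Perm (Fin n)} (hσ : ∀ i ∉ s, σ i = i)
    {x : Fin n} (hx : σ x ≠ x) : σ x ∈ s := by
  by_contra h
  exact hx (σ.injective (hσ _ h))

lemma prod_split2 {s : Finset (Fin n)} {t : Fin n} (ht : t ∈ s) (g : Fin n → E) :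
    ∏ x ∈ s, g x = g t * ∏ x ∈ s.erase t, g x :=
  (Finset.mul_prod_erase s g ht).symm

lemma prod_split3 {s : Finset (Fin n)} {t i : Fin n} (ht : t ∈ s) (hi : i ∈ s.erase t)
    (g : Fin n → E) :
    ∏ x ∈ s, g x = g t * g i * ∏ x ∈ (s.erase t).erase i, g x := by
  rw [← Finset.mul_prod_erase s g ht, ← Finset.mul_prod_erase (s.erase t) g hi, mul_assoc]

noncomputable def Psum (Q χ : Fin n → E) (hb : E) (s : Finset (Fin n)) : E :=
  ∑ σ ∈ Finset.univ.filter (fun σ : Equiv.Perm (Fin n) => ∀ i ∉ s, σ i = i),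
    sgn σ * ∏ x ∈ s, ment Q χ hb x (σ x)

lemma Prec (hQ0 : ∀ i, Q i ≠ 0) (hQ : Function.Injective Q) {s : Finset (Fin n)} {t : Fin n}
    (ht : t ∈ s) :
    Psum Q χ hb s = χ t * Psum Q χ hb (s.erase t)
      + ∑ j ∈ s.erase t, wgt Q hb t j * Psum Q χ hb ((s.erase t).erase j) := by
  classical
  rw [Psum,
    ← Finset.sum_filter_add_sum_filter_not
      (Finset.univ.filter (fun σ : Equiv.Perm (Fin n) => ∀ i ∉ s, σ i = i))
      (fun σ => σ t = t),
    ← Finset.sum_filter_add_sum_filter_not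
      ((Finset.univ.filter (fun σ : Equiv.Perm (Fin n) => ∀ i ∉ s, σ i = i)).filter
        (fun σ => ¬σ t = t))
      (fun σ => σ (σ t) = t)]
  -- Part 1 : fixed point at t
  have part1 :
      ∑ σ ∈ (Finset.univ.filter (fun σ : Equiv.Perm (Fin n) => ∀ i ∉ s, σ i = i)).filter
        (fun σ => σ t = t), sgn σ * ∏ x ∈ s, ment Q χ hb x (σ x)
      = χ t * Psum Q χ hb (s.erase t) := by
    have hset : (Finset.univ.filter (fun σ : Equiv.Perm (Fin n) => ∀ i ∉ s, σ i = i)).filter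
        (fun σ => σ t = t)
        = Finset.univ.filter (fun σ : Equiv.Perm (Fin n) => ∀ i ∉ s.erase t, σ i = i) := by
      ext σ
      simp only [Finset.mem_filter, Finset.mem_univ, true_and]
      constructor
      · rintro ⟨h1, h2⟩ i hi
        by_cases hit : i = t
        · rw [hit]; exact h2
        · exact h1 i (fun hs => hi (Finset.mem_erase.2 ⟨hit, hs⟩))
      · intro h1
        refine ⟨fun i hi => h1 i (fun hc => hi (Finset.mem_erase.1 hc).2),
          h1 t (fun hc => (Finset.mem_erase.1 hc).1 rfl)⟩
    rw [hset, Psum, Finset.mul_sum]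
    refine Finset.sum_congr rfl fun σ hσ => ?_
    simp only [Finset.mem_filter, Finset.mem_univ, true_and] at hσ
    have hσt : σ t = t := hσ t (Finset.notMem_erase t s)
    rw [prod_split2 ht (fun x => ment Q χ hb x (σ x)), hσt, ment_diag t]
    ring
  -- Part 2 : 2-cycle at t
  have part2 :
      ∑ σ ∈ ((Finset.univ.filter (fun σ : Equiv.Perm (Fin n) => ∀ i ∉ s, σ i = i)).filter
          (fun σ => ¬σ t = t)).filter (fun σ => σ (σ t) = t),
        sgn σ * ∏ x ∈ s, ment Q χ hb x (σ x)
      = ∑ j ∈ s.erase t, wgt Q hb t j * Psum Q χ hb ((s.erase t).erase j) := by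
    simp_rw [Psum, Finset.mul_sum]
    rw [Finset.sum_sigma']
    refine (Finset.sum_bij'
      (fun σ _ => (⟨σ t, Equiv.swap t (σ t) * σ⟩ : Σ _ : Fin n, Equiv.Perm (Fin n)))
      (fun p _ => Equiv.swap t p.1 * p.2) ?_ ?_ ?_ ?_ ?_)
    · -- maps into sigma set
      intro σ hσ
      simp only [Finset.mem_filter, Finset.mem_univ, true_and] at hσ
      obtain ⟨⟨hsupp, hne⟩, h2c⟩ := hσ
      have hne' : σ t ≠ t := hne
      have hjs : σ t ∈ s := moved_map_mem hsupp hne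
      refine Finset.mem_sigma.2 ⟨Finset.mem_erase.2 ⟨hne', hjs⟩, ?_⟩
      simp only [Finset.mem_filter, Finset.mem_univ, true_and]
      intro i hi
      rcases eq_or_ne i t with rfl | hit
      · rw [Equiv.Perm.mul_apply, Equiv.swap_apply_right]
      rcases eq_or_ne i (σ t) with rfl | hij
      · rw [Equiv.Perm.mul_apply, h2c, Equiv.swap_apply_left]
      · have his : i ∉ s := by
          intro hc
          exact hi (Finset.mem_erase.2 ⟨hij, Finset.mem_erase.2 ⟨hit, hc⟩⟩)
        rw [Equiv.Perm.mul_apply, hsupp i his, Equiv.swap_apply_of_ne_of_ne hit hij]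
    · -- reverse map into filter set
      intro p hp
      obtain ⟨j, τ⟩ := p
      simp only [Finset.mem_sigma, Finset.mem_filter, Finset.mem_univ, true_and] at hp
      obtain ⟨hj, hτ⟩ := hp
      have hjt : j ≠ t := (Finset.mem_erase.1 hj).1
      have hjs : j ∈ s := (Finset.mem_erase.1 hj).2
      have hτt : τ t = t := hτ t (by simp)
      have hτj : τ j = j := hτ j (by simp)
      have hσt : (Equiv.swap t j * τ) t = j := by
        rw [Equiv.Perm.mul_apply, hτt, Equiv.swap_apply_left]
      simp only [Finset.mem_filter, Finset.mem_univ, true_and]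
      refine ⟨⟨?_, ?_⟩, ?_⟩
      · intro i hi
        have hit : i ≠ t := fun hc => hi (hc ▸ ht)
        have hij : i ≠ j := fun hc => hi (hc ▸ hjs)
        rw [Equiv.Perm.mul_apply, hτ i (fun hc => hi (Finset.mem_of_mem_erase (Finset.mem_of_mem_erase hc))),
          Equiv.swap_apply_of_ne_of_ne hit hij]
      · rw [hσt]; exact hjt.symm ∘ Eq.symm
      · rw [hσt, Equiv.Perm.mul_apply, hτj, Equiv.swap_apply_right]
    · -- left inverse
      intro σ hσ
      show Equiv.swap t (σ t) * (Equiv.swap t (σ t) * σ) = σ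
      rw [← mul_assoc, Equiv.swap_mul_self, one_mul]
    · -- right inverse
      intro p hp
      obtain ⟨j, τ⟩ := p
      simp only [Finset.mem_sigma, Finset.mem_filter, Finset.mem_univ, true_and] at hp
      obtain ⟨hj, hτ⟩ := hp
      have hτt : τ t = t := hτ t (by simp)
      have hσt : (Equiv.swap t j * τ) t = j := by
        rw [Equiv.Perm.mul_apply, hτt, Equiv.swap_apply_left]
      show (⟨(Equiv.swap t j * τ) t, Equiv.swap t ((Equiv.swap t j * τ) t) * (Equiv.swap t j * τ)⟩
          : Σ _ : Fin n, Equiv.Perm (Fin n)) = ⟨j, τ⟩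
      rw [hσt, ← mul_assoc, Equiv.swap_mul_self, one_mul]
    · -- value equality
      intro σ hσ
      simp only [Finset.mem_filter, Finset.mem_univ, true_and] at hσ
      obtain ⟨⟨hsupp, hne⟩, h2c⟩ := hσ
      have hne' : σ t ≠ t := hne
      have hjs : σ t ∈ s := moved_map_mem hsupp hne'
      have hts : (t : Fin n) ≠ σ t := fun hc => hne' hc.symm
      -- product split
      have hj2 : σ t ∈ s.erase t := Finset.mem_erase.2 ⟨hne', hjs⟩
      rw [prod_split3 ht hj2 (fun x => ment Q χ hb x (σ x)), h2c]
      have hprod : ∏ x ∈ (s.erase t).erase (σ t), ment Q χ hb x (σ x)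
          = ∏ x ∈ (s.erase t).erase (σ t), ment Q χ hb x ((Equiv.swap t (σ t) * σ) x) := by
        refine Finset.prod_congr rfl fun x hx => ?_
        have hxt : x ≠ t := (Finset.mem_erase.1 (Finset.mem_of_mem_erase hx)).1
        have hxj : x ≠ σ t := (Finset.mem_erase.1 hx).1
        have h1 : σ x ≠ t := fun hc => hxj (σ.injective (hc.trans h2c.symm))
        have h2 : σ x ≠ σ t := fun hc => hxt (σ.injective hc)
        rw [Equiv.Perm.mul_apply, Equiv.swap_apply_of_ne_of_ne h1 h2]
      rw [hprod]
      have hsgn : (sgn σ : E) = -sgn (Equiv.swap t (σ t) * σ) := by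
        rw [sgn_swap_mul hts, neg_neg]
      rw [hsgn, F2 hQ0 hQ hts]
      ring
  -- Part 3 : t in a cycle of length ≥ 3 : contributes zero
  have part3 :
      ∑ σ ∈ ((Finset.univ.filter (fun σ : Equiv.Perm (Fin n) => ∀ i ∉ s, σ i = i)).filter
          (fun σ => ¬σ t = t)).filter (fun σ => ¬σ (σ t) = t),
        sgn σ * ∏ x ∈ s, ment Q χ hb x (σ x)
      = 0 := by
    have step : ∑ σ ∈ ((Finset.univ.filter (fun σ : Equiv.Perm (Fin n) => ∀ i ∉ s, σ i = i)).filter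
          (fun σ => ¬σ t = t)).filter (fun σ => ¬σ (σ t) = t),
        sgn σ * ∏ x ∈ s, ment Q χ hb x (σ x)
        = ∑ p ∈ (Finset.univ.filter
              (fun τ : Equiv.Perm (Fin n) => ∀ i ∉ s.erase t, τ i = i)).sigma
            (fun τ => (s.erase t).filter (fun i => τ i ≠ i)),
          -(sgn p.1 * (∏ x ∈ s.erase t, ment Q χ hb x (p.1 x)) *
            (ment Q χ hb p.2 t + Q t / Q (p.1 p.2) * ment Q χ hb t (p.1 p.2))) := by
      refine Finset.sum_bij'
        (fun σ _ => (⟨Equiv.swap t (σ t) * σ, σ.symm t⟩ : Σ _ : Equiv.Perm (Fin n), Fin n))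
        (fun p _ => Equiv.swap t (p.1 p.2) * p.1) ?_ ?_ ?_ ?_ ?_
      · -- forward membership
        intro σ hσ
        simp only [Finset.mem_filter, Finset.mem_univ, true_and] at hσ
        obtain ⟨⟨hsupp, hne⟩, hn2⟩ := hσ
        have hne' : σ t ≠ t := hne
        have hjs : σ t ∈ s := moved_map_mem hsupp hne'
        have hi0 : σ (σ.symm t) = t := σ.apply_symm_apply t
        have hi0t : σ.symm t ≠ t := fun hc => hne' ((σ.symm_apply_eq.1 hc).symm)
        have hi0s : σ.symm t ∈ s := moved_mem hsupp (by rw [hi0]; exact fun hc => hi0t hc.symm)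
        refine Finset.mem_sigma.2 ⟨?_, ?_⟩
        · simp only [Finset.mem_filter, Finset.mem_univ, true_and]
          intro i hi
          rcases eq_or_ne i t with rfl | hit
          · rw [Equiv.Perm.mul_apply, Equiv.swap_apply_right]
          · have his : i ∉ s := fun hc => hi (Finset.mem_erase.2 ⟨hit, hc⟩)
            have hij : i ≠ σ t := fun hc => hi (hc ▸ Finset.mem_erase.2 ⟨hne', hjs⟩)
            rw [Equiv.Perm.mul_apply, hsupp i his, Equiv.swap_apply_of_ne_of_ne hit hij]
        · simp only [Finset.mem_filter, Finset.mem_erase]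
          refine ⟨⟨hi0t, hi0s⟩, ?_⟩
          rw [Equiv.Perm.mul_apply, hi0, Equiv.swap_apply_left]
          intro hc
          exact hn2 ((congrArg σ hc.symm).symm.trans hi0)
      · -- backward membership
        intro p hp
        obtain ⟨τ, i⟩ := p
        have hp1 := (Finset.mem_sigma.1 hp).1
        have hp2 := (Finset.mem_sigma.1 hp).2
        simp only [Finset.mem_filter, Finset.mem_univ, true_and] at hp1 hp2
        have hτ : ∀ i ∉ s.erase t, τ i = i := hp1
        have hit : i ≠ t := (Finset.mem_erase.1 hp2.1).1
        have his : i ∈ s := (Finset.mem_erase.1 hp2.1).2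
        have hmv : τ i ≠ i := hp2.2
        have hτt : τ t = t := hτ t (Finset.notMem_erase t s)
        have hjt : τ i ≠ t := fun hc => hit (τ.injective (hc.trans hτt.symm))
        have hjse : τ i ∈ s.erase t := by
          by_contra hc
          exact hmv (τ.injective (hτ (τ i) hc))
        have hji : τ i ≠ i := hmv
        simp only [Finset.mem_filter, Finset.mem_univ, true_and]
        have hσt : (Equiv.swap t (τ i) * τ) t = τ i := by
          rw [Equiv.Perm.mul_apply, hτt, Equiv.swap_apply_left]
        refine ⟨⟨?_, ?_⟩, ?_⟩
        · intro i' hi'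
          have h1 : i' ≠ t := fun hc => hi' (hc ▸ ht)
          have h2 : i' ≠ τ i := fun hc => hi' (hc ▸ Finset.mem_of_mem_erase hjse)
          rw [Equiv.Perm.mul_apply, hτ i' (fun hc => hi' (Finset.mem_of_mem_erase hc)),
            Equiv.swap_apply_of_ne_of_ne h1 h2]
        · rw [hσt]; exact hjt
        · rw [hσt, Equiv.Perm.mul_apply]
          have hτj : τ (τ i) ≠ τ i := fun hc => hji (τ.injective hc)
          have hτjt : τ (τ i) ≠ t := fun hc => hjt (τ.injective (hc.trans hτt.symm))
          rw [Equiv.swap_apply_of_ne_of_ne hτjt hτj]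
          exact hτjt
      · -- left inverse
        intro σ hσ
        have h1 : (Equiv.swap t (σ t) * σ) (σ.symm t) = σ t := by
          rw [Equiv.Perm.mul_apply, σ.apply_symm_apply, Equiv.swap_apply_left]
        show Equiv.swap t ((Equiv.swap t (σ t) * σ) (σ.symm t)) * (Equiv.swap t (σ t) * σ) = σ
        rw [h1, ← mul_assoc, Equiv.swap_mul_self, one_mul]
      · -- right inverse
        intro p hp
        obtain ⟨τ, i⟩ := p
        have hp1 := (Finset.mem_sigma.1 hp).1
        simp only [Finset.mem_filter, Finset.mem_univ, true_and] at hp1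
        have hτt : τ t = t := hp1 t (Finset.notMem_erase t s)
        have hσt : (Equiv.swap t (τ i) * τ) t = τ i := by
          rw [Equiv.Perm.mul_apply, hτt, Equiv.swap_apply_left]
        have hσi : (Equiv.swap t (τ i) * τ) i = t := by
          rw [Equiv.Perm.mul_apply, Equiv.swap_apply_right]
        have hsymm : (Equiv.swap t (τ i) * τ).symm t = i :=
          (Equiv.symm_apply_eq _).2 hσi.symm
        show (⟨Equiv.swap t ((Equiv.swap t (τ i) * τ) t) * (Equiv.swap t (τ i) * τ),
            (Equiv.swap t (τ i) * τ).symm t⟩ : Σ _ : Equiv.Perm (Fin n), Fin n) = ⟨τ, i⟩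
        rw [hσt, ← mul_assoc, Equiv.swap_mul_self, one_mul, hsymm]
      · -- value equality
        intro σ hσ
        simp only [Finset.mem_filter, Finset.mem_univ, true_and] at hσ
        obtain ⟨⟨hsupp, hne⟩, hn2⟩ := hσ
        have hne' : σ t ≠ t := hne
        have hts : t ≠ σ t := fun hc => hne' hc.symm
        have hjs : σ t ∈ s := moved_map_mem hsupp hne'
        have hi0 : σ (σ.symm t) = t := σ.apply_symm_apply t
        have hi0t : σ.symm t ≠ t := fun hc => hne' ((σ.symm_apply_eq.1 hc).symm)
        have hi0s : σ.symm t ∈ s := moved_mem hsupp (by rw [hi0]; exact fun hc => hi0t hc.symm)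
        have hi0e : σ.symm t ∈ s.erase t := Finset.mem_erase.2 ⟨hi0t, hi0s⟩
        have hi0j : σ.symm t ≠ σ t := fun hc => hn2 ((congrArg σ hc.symm).trans hi0)
        have hτi0 : (Equiv.swap t (σ t) * σ) (σ.symm t) = σ t := by
          rw [Equiv.Perm.mul_apply, hi0, Equiv.swap_apply_left]
        have hsgn : (sgn σ : E) = -sgn (Equiv.swap t (σ t) * σ) := by
          rw [sgn_swap_mul hts, neg_neg]
        have hprod : ∏ x ∈ (s.erase t).erase (σ.symm t), ment Q χ hb x (σ x)
            = ∏ x ∈ (s.erase t).erase (σ.symm t), ment Q χ hb x ((Equiv.swap t (σ t) * σ) x) := by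
          refine Finset.prod_congr rfl fun x hx => ?_
          have hxt : x ≠ t := (Finset.mem_erase.1 (Finset.mem_of_mem_erase hx)).1
          have hxi : x ≠ σ.symm t := (Finset.mem_erase.1 hx).1
          have h1 : σ x ≠ t := fun hc => hxi (by rw [← hc, Equiv.symm_apply_apply])
          have h2 : σ x ≠ σ t := fun hc => hxt (σ.injective hc)
          rw [Equiv.Perm.mul_apply, Equiv.swap_apply_of_ne_of_ne h1 h2]
        have hsplit : ∏ x ∈ s.erase t, ment Q χ hb x ((Equiv.swap t (σ t) * σ) x)
            = ment Q χ hb (σ.symm t) (σ t) *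
              ∏ x ∈ (s.erase t).erase (σ.symm t), ment Q χ hb x ((Equiv.swap t (σ t) * σ) x) := by
          rw [prod_split2 hi0e (fun x => ment Q χ hb x ((Equiv.swap t (σ t) * σ) x)), hτi0]
        have hF3 : ment Q χ hb (σ.symm t) t * ment Q χ hb t (σ t) =
            ment Q χ hb (σ.symm t) (σ t) *
              (ment Q χ hb (σ.symm t) t + Q t / Q (σ t) * ment Q χ hb t (σ t)) :=
          F3 hQ0 hQ hi0t hts hi0j
        rw [prod_split3 ht hi0e (fun x => ment Q χ hb x (σ x)), hi0, hprod, hsgn, hτi0, hsplit]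
        linear_combination (-(sgn (Equiv.swap t (σ t) * σ) : E) *
          ∏ x ∈ (s.erase t).erase (σ.symm t),
            ment Q χ hb x ((Equiv.swap t (σ t) * σ) x)) * hF3
    rw [step, ← Finset.sum_sigma'
      (Finset.univ.filter (fun τ : Equiv.Perm (Fin n) => ∀ i ∉ s.erase t, τ i = i))
      (fun τ => (s.erase t).filter (fun i => τ i ≠ i))
      (fun τ i => -(sgn τ * (∏ x ∈ s.erase t, ment Q χ hb x (τ x)) *
            (ment Q χ hb i t + Q t / Q (τ i) * ment Q χ hb t (τ i))))]
    refine Finset.sum_eq_zero fun τ hτ => ?_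
    simp only [Finset.mem_filter, Finset.mem_univ, true_and] at hτ
    have hre : ∑ i ∈ (s.erase t).filter (fun i => τ i ≠ i), Q t / Q (τ i) * ment Q χ hb t (τ i)
        = ∑ i ∈ (s.erase t).filter (fun i => τ i ≠ i), Q t / Q i * ment Q χ hb t i := by
      refine Finset.sum_bij' (fun i _ => τ i) (fun i _ => τ.symm i) ?_ ?_ ?_ ?_ ?_
      · intro i hi
        simp only [Finset.mem_filter] at hi ⊢
        obtain ⟨hie, hmv⟩ := hi
        have h1 : τ i ∈ s.erase t := by
          by_contra hc
          exact hmv (τ.injective (hτ (τ i) hc))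
        exact ⟨h1, fun hc => hmv (τ.injective hc)⟩
      · intro i hi
        simp only [Finset.mem_filter] at hi ⊢
        obtain ⟨hie, hmv⟩ := hi
        have h0 : τ (τ.symm i) = i := τ.apply_symm_apply i
        have hmv' : τ.symm i ≠ i := fun hc2 => hmv ((τ.symm_apply_eq.1 hc2).symm)
        have h1 : τ.symm i ∈ s.erase t := by
          by_contra hc
          exact hmv' ((h0.symm.trans (hτ (τ.symm i) hc)).symm)
        refine ⟨h1, ?_⟩
        rw [h0]
        exact fun hc2 => hmv' hc2.symm
      · intro i _; exact τ.symm_apply_apply i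
      · intro i _; exact τ.apply_symm_apply i
      · intro i _; rfl
    have hzero : ∑ i ∈ (s.erase t).filter (fun i => τ i ≠ i),
        (ment Q χ hb i t + Q t / Q (τ i) * ment Q χ hb t (τ i)) = 0 := by
      rw [Finset.sum_add_distrib, hre, ← Finset.sum_add_distrib]
      refine Finset.sum_eq_zero fun i hi => ?_
      have hit : i ≠ t := (Finset.mem_erase.1 (Finset.mem_filter.1 hi).1).1
      exact F4 hQ0 hQ hit
    have hfac : ∀ i ∈ (s.erase t).filter (fun i => τ i ≠ i),
        -(sgn τ * (∏ x ∈ s.erase t, ment Q χ hb x (τ x)) *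
            (ment Q χ hb i t + Q t / Q (τ i) * ment Q χ hb t (τ i)))
        = (-(sgn τ * ∏ x ∈ s.erase t, ment Q χ hb x (τ x))) *
            (ment Q χ hb i t + Q t / Q (τ i) * ment Q χ hb t (τ i)) := by
      intro i _; ring
    rw [Finset.sum_congr rfl hfac, ← Finset.mul_sum, hzero, mul_zero]
  rw [part1, part2, part3, add_zero]




lemma inv_apply_self {π : Equiv.Perm (Fin n)} (hinv : π * π = 1) (x : Fin n) : π (π x) = x := by
  rw [← Equiv.Perm.mul_apply, hinv, Equiv.Perm.one_apply]

lemma swap_mul_inv {π : Equiv.Perm (Fin n)} (hinv : π * π = 1) {t : Fin n} (hne : π t ≠ t) :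
    (Equiv.swap t (π t) * π) * (Equiv.swap t (π t) * π) = 1 := by
  have h2 : π (π t) = t := inv_apply_self hinv t
  ext x
  simp only [Equiv.Perm.mul_apply, Equiv.Perm.coe_mul, Function.comp_apply, Equiv.Perm.coe_one,
    id_eq, Equiv.Perm.one_apply]
  rcases eq_or_ne x t with rfl | hxt
  · rw [Equiv.swap_apply_right, Equiv.swap_apply_right]
  rcases eq_or_ne x (π t) with rfl | hxj
  · rw [h2, Equiv.swap_apply_left, h2, Equiv.swap_apply_left]
  · have h3 : π x ≠ t := fun hc => hxj (by rw [← hc, inv_apply_self hinv x])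
    have h4 : π x ≠ π t := fun hc => hxt (π.injective hc)
    rw [Equiv.swap_apply_of_ne_of_ne h3 h4, inv_apply_self hinv x,
      Equiv.swap_apply_of_ne_of_ne hxt hxj]

lemma swap_mul_inv' {ρ : Equiv.Perm (Fin n)} (hinv : ρ * ρ = 1) {t j : Fin n}
    (hρt : ρ t = t) (hρj : ρ j = j) :
    (Equiv.swap t j * ρ) * (Equiv.swap t j * ρ) = 1 := by
  ext x
  simp only [Equiv.Perm.mul_apply, Equiv.Perm.coe_mul, Function.comp_apply, Equiv.Perm.coe_one,
    id_eq, Equiv.Perm.one_apply]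
  rcases eq_or_ne x t with rfl | hxt
  · rw [hρt, Equiv.swap_apply_left, hρj, Equiv.swap_apply_right]
  rcases eq_or_ne x j with rfl | hxj
  · rw [hρj, Equiv.swap_apply_right, hρt, Equiv.swap_apply_left]
  · have h3 : ρ x ≠ t := fun hc => hxt (by rw [← inv_apply_self hinv x, hc, hρt])
    have h4 : ρ x ≠ j := fun hc => hxj (by rw [← inv_apply_self hinv x, hc, hρj])
    rw [Equiv.swap_apply_of_ne_of_ne h3 h4, inv_apply_self hinv x,
      Equiv.swap_apply_of_ne_of_ne hxt hxj]


noncomputable def Qsum (Q χ : Fin n → E) (hb : E) (s : Finset (Fin n)) : E :=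
  ∑ π ∈ Finset.univ.filter (fun π : Equiv.Perm (Fin n) => π * π = 1 ∧ ∀ i ∉ s, π i = i),
    (∏ i ∈ s.filter (fun i => π i = i), χ i) *
      ∏ i ∈ s.filter (fun i => i < π i), wgt Q hb i (π i)

lemma moved_mem' {s : Finset (Fin n)} {σ : Equiv.Perm (Fin n)} (hσ : ∀ i ∉ s, σ i = i)
    {x : Fin n} (hx : σ x ≠ x) : x ∈ s := by
  by_contra h; exact hx (hσ x h)

lemma moved_map_mem' {s : Finset (Fin n)} {σ : Equiv.Perm (Fin n)} (hσ : ∀ i ∉ s, σ i = i)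
    {x : Fin n} (hx : σ x ≠ x) : σ x ∈ s := by
  by_contra h
  exact hx (σ.injective (hσ _ h))

lemma Qrec {s : Finset (Fin n)} {t : Fin n} (ht : t ∈ s) :
    Qsum Q χ hb s = χ t * Qsum Q χ hb (s.erase t)
      + ∑ j ∈ s.erase t, wgt Q hb t j * Qsum Q χ hb ((s.erase t).erase j) := by
  classical
  rw [Qsum, ← Finset.sum_filter_add_sum_filter_not
      (Finset.univ.filter (fun π : Equiv.Perm (Fin n) => π * π = 1 ∧ ∀ i ∉ s, π i = i))
      (fun π => π t = t)]
  have part1 : ∑ π ∈ (Finset.univ.filter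
        (fun π : Equiv.Perm (Fin n) => π * π = 1 ∧ ∀ i ∉ s, π i = i)).filter
        (fun π => π t = t),
      (∏ i ∈ s.filter (fun i => π i = i), χ i) *
        ∏ i ∈ s.filter (fun i => i < π i), wgt Q hb i (π i)
      = χ t * Qsum Q χ hb (s.erase t) := by
    have hset : (Finset.univ.filter
        (fun π : Equiv.Perm (Fin n) => π * π = 1 ∧ ∀ i ∉ s, π i = i)).filter
        (fun π => π t = t)
        = Finset.univ.filter
          (fun π : Equiv.Perm (Fin n) => π * π = 1 ∧ ∀ i ∉ s.erase t, π i = i) := by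
      ext π
      simp only [Finset.mem_filter, Finset.mem_univ, true_and]
      constructor
      · rintro ⟨⟨h1, h2⟩, h3⟩
        refine ⟨h1, fun i hi => ?_⟩
        by_cases hit : i = t
        · rw [hit]; exact h3
        · exact h2 i (fun hs => hi (Finset.mem_erase.2 ⟨hit, hs⟩))
      · rintro ⟨h1, h2⟩
        exact ⟨⟨h1, fun i hi => h2 i (fun hc => hi (Finset.mem_erase.1 hc).2)⟩,
          h2 t (fun hc => (Finset.mem_erase.1 hc).1 rfl)⟩
    rw [hset, Qsum, Finset.mul_sum]
    refine Finset.sum_congr rfl fun π hπ => ?_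
    simp only [Finset.mem_filter, Finset.mem_univ, true_and] at hπ
    have hπt : π t = t := hπ.2 t (Finset.notMem_erase t s)
    have hfix : s.filter (fun i => π i = i)
        = insert t ((s.erase t).filter (fun i => π i = i)) := by
      ext i
      simp only [Finset.mem_filter, Finset.mem_insert, Finset.mem_erase]
      constructor
      · rintro ⟨his, hf⟩
        rcases eq_or_ne i t with rfl | hit
        · exact Or.inl rfl
        · exact Or.inr ⟨⟨hit, his⟩, hf⟩
      · rintro (rfl | ⟨⟨hit, his⟩, hf⟩)
        exacts [⟨ht, hπt⟩, ⟨his, hf⟩]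
    have hlt : s.filter (fun i => i < π i) = (s.erase t).filter (fun i => i < π i) := by
      ext i
      simp only [Finset.mem_filter, Finset.mem_erase]
      constructor
      · rintro ⟨his, hl⟩
        refine ⟨⟨?_, his⟩, hl⟩
        rintro rfl
        rw [hπt] at hl
        exact lt_irrefl _ hl
      · rintro ⟨⟨hit, his⟩, h⟩
        exact ⟨his, h⟩
    rw [hfix, hlt,
      Finset.prod_insert (fun hc => (Finset.mem_erase.1 (Finset.mem_filter.1 hc).1).1 rfl)]
    ring
  have part2 : ∑ π ∈ (Finset.univ.filter
        (fun π : Equiv.Perm (Fin n) => π * π = 1 ∧ ∀ i ∉ s, π i = i)).filter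
        (fun π => ¬π t = t),
      (∏ i ∈ s.filter (fun i => π i = i), χ i) *
        ∏ i ∈ s.filter (fun i => i < π i), wgt Q hb i (π i)
      = ∑ j ∈ s.erase t, wgt Q hb t j * Qsum Q χ hb ((s.erase t).erase j) := by
    simp_rw [Qsum, Finset.mul_sum]
    rw [Finset.sum_sigma']
    refine Finset.sum_bij'
      (fun π _ => (⟨π t, Equiv.swap t (π t) * π⟩ : Σ _ : Fin n, Equiv.Perm (Fin n)))
      (fun p _ => Equiv.swap t p.1 * p.2) ?_ ?_ ?_ ?_ ?_
    · -- forward membership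
      intro π hπ
      simp only [Finset.mem_filter, Finset.mem_univ, true_and] at hπ
      obtain ⟨⟨hinv, hsupp⟩, hne⟩ := hπ
      have hne' : π t ≠ t := hne
      have h2c : π (π t) = t := inv_apply_self hinv t
      have hjs : π t ∈ s := moved_map_mem' hsupp hne'
      refine Finset.mem_sigma.2 ⟨Finset.mem_erase.2 ⟨hne', hjs⟩, ?_⟩
      simp only [Finset.mem_filter, Finset.mem_univ, true_and]
      refine ⟨swap_mul_inv hinv hne', ?_⟩
      intro i hi
      rcases eq_or_ne i t with rfl | hit
      · rw [Equiv.Perm.mul_apply, Equiv.swap_apply_right]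
      rcases eq_or_ne i (π t) with rfl | hij
      · rw [Equiv.Perm.mul_apply, h2c, Equiv.swap_apply_left]
      · have his : i ∉ s := by
          intro hc
          exact hi (Finset.mem_erase.2 ⟨hij, Finset.mem_erase.2 ⟨hit, hc⟩⟩)
        rw [Equiv.Perm.mul_apply, hsupp i his, Equiv.swap_apply_of_ne_of_ne hit hij]
    · -- backward membership
      intro p hp
      obtain ⟨j, ρ⟩ := p
      have hp1 := (Finset.mem_sigma.1 hp).1
      have hp2 := (Finset.mem_sigma.1 hp).2
      simp only [Finset.mem_filter, Finset.mem_univ, true_and] at hp2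
      obtain ⟨hinv, hρ⟩ := hp2
      have hjt : j ≠ t := (Finset.mem_erase.1 hp1).1
      have hjs : j ∈ s := (Finset.mem_erase.1 hp1).2
      have hρt : ρ t = t := hρ t (fun hc => Finset.notMem_erase t s (Finset.mem_of_mem_erase hc))
      have hρj : ρ j = j := hρ j (Finset.notMem_erase j _)
      have hσt : (Equiv.swap t j * ρ) t = j := by
        rw [Equiv.Perm.mul_apply, hρt, Equiv.swap_apply_left]
      simp only [Finset.mem_filter, Finset.mem_univ, true_and]
      refine ⟨⟨swap_mul_inv' hinv hρt hρj, ?_⟩, ?_⟩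
      · intro i hi
        have hit : i ≠ t := fun hc => hi (hc ▸ ht)
        have hij : i ≠ j := fun hc => hi (hc ▸ hjs)
        rw [Equiv.Perm.mul_apply,
          hρ i (fun hc => hi (Finset.mem_of_mem_erase (Finset.mem_of_mem_erase hc))),
          Equiv.swap_apply_of_ne_of_ne hit hij]
      · rw [hσt]; exact hjt.symm ∘ Eq.symm
    · -- left inverse
      intro π hπ
      show Equiv.swap t (π t) * (Equiv.swap t (π t) * π) = π
      rw [← mul_assoc, Equiv.swap_mul_self, one_mul]
    · -- right inverse
      intro p hp
      obtain ⟨j, ρ⟩ := p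
      have hp1 := (Finset.mem_sigma.1 hp).1
      have hp2 := (Finset.mem_sigma.1 hp).2
      simp only [Finset.mem_filter, Finset.mem_univ, true_and] at hp2
      have hρt : ρ t = t := hp2.2 t
        (fun hc => Finset.notMem_erase t s (Finset.mem_of_mem_erase hc))
      have hσt : (Equiv.swap t j * ρ) t = j := by
        rw [Equiv.Perm.mul_apply, hρt, Equiv.swap_apply_left]
      show (⟨(Equiv.swap t j * ρ) t, Equiv.swap t ((Equiv.swap t j * ρ) t) * (Equiv.swap t j * ρ)⟩
          : Σ _ : Fin n, Equiv.Perm (Fin n)) = ⟨j, ρ⟩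
      rw [hσt, ← mul_assoc, Equiv.swap_mul_self, one_mul]
    · -- value equality
      intro π hπ
      simp only [Finset.mem_filter, Finset.mem_univ, true_and] at hπ
      obtain ⟨⟨hinv, hsupp⟩, hne⟩ := hπ
      have hne' : π t ≠ t := hne
      have hts : t ≠ π t := fun hc => hne' hc.symm
      have h2c : π (π t) = t := inv_apply_self hinv t
      have hjs : π t ∈ s := moved_map_mem' hsupp hne'
      have hππ : ∀ i, i ≠ t → i ≠ π t → (Equiv.swap t (π t) * π) i = π i := by
        intro i hit hij
        have h1 : π i ≠ t := fun hc => hij (by rw [← hc, inv_apply_self hinv i])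
        have h2 : π i ≠ π t := fun hc => hit (π.injective hc)
        rw [Equiv.Perm.mul_apply, Equiv.swap_apply_of_ne_of_ne h1 h2]
      have hfix : s.filter (fun i => π i = i)
          = ((s.erase t).erase (π t)).filter (fun i => (Equiv.swap t (π t) * π) i = i) := by
        ext i
        simp only [Finset.mem_filter, Finset.mem_erase]
        constructor
        · rintro ⟨his, hf⟩
          have hit : i ≠ t := fun hc => hne' (hc ▸ hf)
          have hij : i ≠ π t := by
            rintro rfl
            exact hne' (hf.symm.trans h2c)
          exact ⟨⟨hij, hit, his⟩, by rw [hππ i hit hij, hf]⟩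
        · rintro ⟨⟨hij, hit, his⟩, hf⟩
          rw [hππ i hit hij] at hf
          exact ⟨his, hf⟩
      -- the pairs product
      rcases hts.lt_or_gt with hlt | hlt
      · -- t < π t
        have hw : s.filter (fun i => i < π i)
            = insert t (((s.erase t).erase (π t)).filter
                (fun i => i < (Equiv.swap t (π t) * π) i)) := by
          ext i
          simp only [Finset.mem_filter, Finset.mem_insert, Finset.mem_erase]
          constructor
          · rintro ⟨his, hl⟩
            rcases eq_or_ne i t with rfl | hit
            · exact Or.inl rfl
            · have hij : i ≠ π t := by
                rintro rfl
                rw [h2c] at hl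
                exact absurd (hlt.trans hl) (lt_irrefl _)
              exact Or.inr ⟨⟨hij, hit, his⟩, by rw [hππ i hit hij]; exact hl⟩
          · rintro (rfl | ⟨⟨hij, hit, his⟩, hl⟩)
            · exact ⟨ht, hlt⟩
            · rw [hππ i hit hij] at hl
              exact ⟨his, hl⟩
        have htni : t ∉ ((s.erase t).erase (π t)).filter
            (fun i => i < (Equiv.swap t (π t) * π) i) :=
          fun hc => Finset.notMem_erase t s
            (Finset.mem_of_mem_erase (Finset.mem_filter.1 hc).1)
        have hpr : ∏ i ∈ ((s.erase t).erase (π t)).filter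
              (fun i => i < (Equiv.swap t (π t) * π) i), wgt Q hb i (π i)
            = ∏ i ∈ ((s.erase t).erase (π t)).filter
              (fun i => i < (Equiv.swap t (π t) * π) i), wgt Q hb i ((Equiv.swap t (π t) * π) i) := by
          refine Finset.prod_congr rfl fun i hi => ?_
          have h1 := Finset.mem_erase.1 (Finset.mem_filter.1 hi).1
          have hit : i ≠ t := (Finset.mem_erase.1 h1.2).1
          rw [hππ i hit h1.1]
        rw [hfix, hw, Finset.prod_insert htni, hpr]
        ring
      · -- π t < t
        have hw : s.filter (fun i => i < π i)
            = insert (π t) (((s.erase t).erase (π t)).filter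
                (fun i => i < (Equiv.swap t (π t) * π) i)) := by
          ext i
          simp only [Finset.mem_filter, Finset.mem_insert, Finset.mem_erase]
          constructor
          · rintro ⟨his, hl⟩
            rcases eq_or_ne i (π t) with rfl | hij
            · exact Or.inl rfl
            · have hit : i ≠ t := by
                rintro rfl
                exact absurd (hlt.trans hl) (lt_irrefl _)
              exact Or.inr ⟨⟨hij, hit, his⟩, by rw [hππ i hit hij]; exact hl⟩
          · rintro (rfl | ⟨⟨hij, hit, his⟩, hl⟩)
            · rw [h2c]
              exact ⟨hjs, hlt⟩
            · rw [hππ i hit hij] at hl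
              exact ⟨his, hl⟩
        have hni : π t ∉ ((s.erase t).erase (π t)).filter
            (fun i => i < (Equiv.swap t (π t) * π) i) :=
          fun hc => (Finset.mem_erase.1 (Finset.mem_filter.1 hc).1).1 rfl
        have hpr : ∏ i ∈ ((s.erase t).erase (π t)).filter
              (fun i => i < (Equiv.swap t (π t) * π) i), wgt Q hb i (π i)
            = ∏ i ∈ ((s.erase t).erase (π t)).filter
              (fun i => i < (Equiv.swap t (π t) * π) i), wgt Q hb i ((Equiv.swap t (π t) * π) i) := by
          refine Finset.prod_congr rfl fun i hi => ?_
          have h1 := Finset.mem_erase.1 (Finset.mem_filter.1 hi).1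
          have hit : i ≠ t := (Finset.mem_erase.1 h1.2).1
          rw [hππ i hit h1.1]
        have hval : wgt Q hb (π t) (π (π t)) = wgt Q hb t (π t) := by
          rw [h2c, wgt_symm]
        rw [hfix, hw, Finset.prod_insert hni, hpr, hval]
        ring
  rw [part1, part2]




lemma Psum_empty : Psum Q χ hb (∅ : Finset (Fin n)) = 1 := by
  rw [Psum]
  have hset : (Finset.univ.filter (fun σ : Equiv.Perm (Fin n) =>
      ∀ i ∉ (∅ : Finset (Fin n)), σ i = i)) = {1} := by
    ext σ
    simp only [Finset.mem_filter, Finset.mem_univ, true_and, Finset.notMem_empty,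
      Finset.mem_singleton]
    constructor
    · intro h
      exact Equiv.ext fun x => h x (fun hc => hc)
    · rintro rfl i _
      rfl
  rw [hset, Finset.sum_singleton, Finset.prod_empty, mul_one]
  simp [sgn]

lemma Qsum_empty : Qsum Q χ hb (∅ : Finset (Fin n)) = 1 := by
  rw [Qsum]
  have hset : (Finset.univ.filter (fun π : Equiv.Perm (Fin n) =>
      π * π = 1 ∧ ∀ i ∉ (∅ : Finset (Fin n)), π i = i)) = {1} := by
    ext π
    simp only [Finset.mem_filter, Finset.mem_univ, true_and, Finset.notMem_empty,
      Finset.mem_singleton]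
    constructor
    · rintro ⟨h1, h2⟩
      exact Equiv.ext fun x => h2 x (fun hc => hc)
    · rintro rfl
      exact ⟨one_mul 1, fun i _ => rfl⟩
  rw [hset, Finset.sum_singleton, Finset.filter_empty, Finset.filter_empty,
    Finset.prod_empty, Finset.prod_empty, mul_one]

lemma key (hQ0 : ∀ i, Q i ≠ 0) (hQ : Function.Injective Q) (s : Finset (Fin n)) :
    Psum Q χ hb s = Qsum Q χ hb s := by
  induction s using Finset.strongInduction with
  | _ s ih =>
    rcases Finset.eq_empty_or_nonempty s with rfl | ⟨t, ht⟩
    · rw [Psum_empty, Qsum_empty]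
    · rw [Prec hQ0 hQ ht, Qrec ht, ih (s.erase t) (Finset.erase_ssubset ht)]
      congr 1
      refine Finset.sum_congr rfl fun j hj => ?_
      rw [ih ((s.erase t).erase j)
        (lt_of_le_of_lt (Finset.erase_subset j (s.erase t)) (Finset.erase_ssubset ht))]


open Polynomial in
lemma stepA {F : Type*} [Field F] (n : ℕ) (q χ : Fin n → F) (ℏ : F)
    (hq0 : ∀ i, q i ≠ 0) (hq : Function.Injective q) :
    Matrix.det ((Polynomial.X : Polynomial F) • (1 : Matrix (Fin n) (Fin n) (Polynomial F)) +
      (Matrix.of fun i j : Fin n => if i = j then χ i else ℏ / (1 - q i / q j)).map Polynomial.C)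
    = ∑ π ∈ Finset.univ.filter (fun π : Equiv.Perm (Fin n) => π * π = 1),
        (∏ i ∈ Finset.univ.filter (fun i => π i = i), (Polynomial.X + Polynomial.C (χ i))) *
          Polynomial.C (∏ i ∈ Finset.univ.filter (fun i => i < π i),
            (ℏ ^ 2 * q i * q (π i) / (q i - q (π i)) ^ 2)) := by
  classical
  set φ : Polynomial F →+* RatFunc F := algebraMap (Polynomial F) (RatFunc F) with hφ
  have hinj : Function.Injective φ := IsFractionRing.injective (Polynomial F) (RatFunc F)
  apply hinj
  rw [RingHom.map_det, Matrix.det_apply']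
  set aF : F →+* RatFunc F := φ.comp Polynomial.C with haF
  have haFinj : Function.Injective aF := aF.injective
  set QE : Fin n → RatFunc F := fun i => (aF (q i))⁻¹ with hQE
  have haq : ∀ i, aF (q i) ≠ 0 := fun i hc => hq0 i (haFinj (by rw [hc, map_zero]))
  have hQE0 : ∀ i, QE i ≠ 0 := fun i => inv_ne_zero (haq i)
  have hQEinj : Function.Injective QE := fun a b h => hq (haFinj (inv_injective h))
  set χE : Fin n → RatFunc F := fun x => φ (Polynomial.X + Polynomial.C (χ x)) with hχE
  have hentry : ∀ (σ : Equiv.Perm (Fin n)) (i : Fin n),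
      (((Polynomial.X : Polynomial F) • (1 : Matrix (Fin n) (Fin n) (Polynomial F)) +
        (Matrix.of fun i j : Fin n => if i = j then χ i
          else ℏ / (1 - q i / q j)).map Polynomial.C).map φ) (σ i) i
      = ment QE χE (aF ℏ) i (σ i) := by
    intro σ i
    rw [Matrix.map_apply, Matrix.add_apply, Matrix.smul_apply, Matrix.map_apply, Matrix.of_apply]
    rcases eq_or_ne (σ i) i with he | hne
    · rw [he, Matrix.one_apply_eq, if_pos rfl, smul_eq_mul, mul_one, ment_diag]
    · rw [Matrix.one_apply_ne hne, if_neg hne, smul_eq_mul, mul_zero, zero_add,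
        ment_ne (Ne.symm hne)]
      show aF (ℏ / (1 - q (σ i) / q i)) = aF ℏ / (1 - QE i / QE (σ i))
      have hdiv : QE i / QE (σ i) = aF (q (σ i)) / aF (q i) := by
        simp only [hQE]
        rw [inv_div_inv]
      rw [map_div₀, map_sub, map_one, map_div₀, hdiv]
  trans (Psum QE χE (aF ℏ) Finset.univ)
  · rw [Psum, Finset.filter_true_of_mem (fun σ _ => fun i hi => absurd (Finset.mem_univ i) hi)]
    refine Finset.sum_congr rfl fun σ _ => ?_
    rw [sgn]
    congr 1
    exact Finset.prod_congr rfl fun i _ => hentry σ i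
  rw [key hQE0 hQEinj, Qsum]
  have hfilter : Finset.univ.filter
      (fun π : Equiv.Perm (Fin n) => π * π = 1 ∧ ∀ i ∉ (Finset.univ : Finset (Fin n)), π i = i)
      = Finset.univ.filter (fun π : Equiv.Perm (Fin n) => π * π = 1) := by
    refine Finset.filter_congr fun π _ => ?_
    simp
  rw [hfilter, map_sum]
  refine Finset.sum_congr rfl fun π _ => ?_
  rw [map_mul, map_prod]
  congr 1
  show _ = aF (∏ i ∈ Finset.univ.filter (fun i => i < π i),
      (ℏ ^ 2 * q i * q (π i) / (q i - q (π i)) ^ 2))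
  rw [map_prod]
  refine Finset.prod_congr rfl fun i _ => ?_
  rw [wgt]
  rcases eq_or_ne (q i) (q (π i)) with he | hne
  · have h1 : QE i = QE (π i) := by simp only [hQE]; rw [he]
    rw [h1, sub_self, zero_pow (by norm_num : (2:ℕ) ≠ 0), div_zero, he, sub_self,
      zero_pow (by norm_num : (2:ℕ) ≠ 0), div_zero, map_zero]
  · have h1 : aF (q i) - aF (q (π i)) ≠ 0 := sub_ne_zero.2 (fun hc => hne (haFinj hc))
    have h2 : aF (q i) ≠ 0 := haq i
    have h3 : aF (q (π i)) ≠ 0 := haq (π i)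
    rw [map_div₀, map_mul, map_mul, map_pow, map_pow, map_sub]
    have h4 : QE i - QE (π i) ≠ 0 := by
      simp only [hQE]
      rw [inv_sub_inv h2 h3]
      exact div_ne_zero (sub_ne_zero.2 (fun hc => hne (haFinj hc.symm))) (mul_ne_zero h2 h3)
    rw [div_eq_div_iff (pow_ne_zero 2 h4) (pow_ne_zero 2 h1)]
    simp only [hQE]
    field_simp
    ring

end CombForEk

/-- (Theorem `combforEk`.) Let `M(χ)` be the matrix with diagonal
entries `χ i` and off-diagonal entries `ℏ/(1 - q i / q j)`, for nonzero pairwise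
distinct `q i` in a field `F`. Writing `det (y • 1 + M(χ)) = yⁿ + E 1 * yⁿ⁻¹ + ⋯ + E n`
in `F[y]`, for each `1 ≤ k ≤ n` the coefficient `E k` (i.e. the coefficient of
`y^(n-k)`) equals the sum over all `k`-element subsets `K` of `{1,…,n}` and all
matchings `π` of `K` (involutions of `{1,…,n}` fixing the complement of `K`
pointwise) of `J(π) * V(π)`. -/
theorem coeff_charpoly_M_chi_eq_sum_matchings {F : Type*} [Field F] (n : ℕ)
    (q χ : Fin n → F) (ℏ : F)
    (hq0 : ∀ i, q i ≠ 0) (hq : Function.Injective q) :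
    ∀ k : ℕ, 1 ≤ k → k ≤ n →
      (Matrix.det
        ((Polynomial.X : Polynomial F) • (1 : Matrix (Fin n) (Fin n) (Polynomial F)) +
          (Matrix.of fun i j : Fin n =>
            if i = j then χ i else ℏ / (1 - q i / q j)).map Polynomial.C)).coeff (n - k) =
      ∑ K ∈ Finset.powersetCard k (Finset.univ : Finset (Fin n)),
        ∑ π ∈ Finset.univ.filter
            (fun π : Equiv.Perm (Fin n) => π * π = 1 ∧ ∀ i ∉ K, π i = i),
          (∏ i ∈ K.filter (fun i => π i = i), χ i) *
          (∏ i ∈ K.filter (fun i => i < π i),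
            ℏ ^ 2 * q i * q (π i) / (q i - q (π i)) ^ 2) := by
  classical
  classical
  intro k hk1 hkn
  rw [CombForEk.stepA n q χ ℏ hq0 hq, Polynomial.finset_sum_coeff]
  simp_rw [Polynomial.coeff_mul_C]
  -- reorganize the RHS double sum
  have hRHS : (∑ K ∈ Finset.powersetCard k (Finset.univ : Finset (Fin n)),
        ∑ π ∈ Finset.univ.filter
            (fun π : Equiv.Perm (Fin n) => π * π = 1 ∧ ∀ i ∉ K, π i = i),
          (∏ i ∈ K.filter (fun i => π i = i), χ i) *
          (∏ i ∈ K.filter (fun i => i < π i),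
            ℏ ^ 2 * q i * q (π i) / (q i - q (π i)) ^ 2))
      = ∑ π ∈ Finset.univ.filter (fun π : Equiv.Perm (Fin n) => π * π = 1),
          ∑ K ∈ (Finset.powersetCard k (Finset.univ : Finset (Fin n))).filter
              (fun K => ∀ i ∉ K, π i = i),
            (∏ i ∈ K.filter (fun i => π i = i), χ i) *
            (∏ i ∈ K.filter (fun i => i < π i),
              ℏ ^ 2 * q i * q (π i) / (q i - q (π i)) ^ 2) := by
    have h1 : ∀ K : Finset (Fin n), (Finset.univ.filter
        (fun π : Equiv.Perm (Fin n) => π * π = 1 ∧ ∀ i ∉ K, π i = i))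
        = (Finset.univ.filter (fun π : Equiv.Perm (Fin n) => π * π = 1)).filter
            (fun π => ∀ i ∉ K, π i = i) := by
      intro K
      rw [Finset.filter_filter]
    calc ∑ K ∈ Finset.powersetCard k (Finset.univ : Finset (Fin n)),
          ∑ π ∈ Finset.univ.filter
            (fun π : Equiv.Perm (Fin n) => π * π = 1 ∧ ∀ i ∉ K, π i = i),
          (∏ i ∈ K.filter (fun i => π i = i), χ i) *
          (∏ i ∈ K.filter (fun i => i < π i),
            ℏ ^ 2 * q i * q (π i) / (q i - q (π i)) ^ 2)
        = ∑ K ∈ Finset.powersetCard k (Finset.univ : Finset (Fin n)),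
          ∑ π ∈ Finset.univ.filter (fun π : Equiv.Perm (Fin n) => π * π = 1),
            if (∀ i ∉ K, π i = i) then
              (∏ i ∈ K.filter (fun i => π i = i), χ i) *
              (∏ i ∈ K.filter (fun i => i < π i),
                ℏ ^ 2 * q i * q (π i) / (q i - q (π i)) ^ 2) else 0 := by
          refine Finset.sum_congr rfl fun K _ => ?_
          rw [h1 K, Finset.sum_filter]
      _ = ∑ π ∈ Finset.univ.filter (fun π : Equiv.Perm (Fin n) => π * π = 1),
          ∑ K ∈ Finset.powersetCard k (Finset.univ : Finset (Fin n)),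
            if (∀ i ∉ K, π i = i) then
              (∏ i ∈ K.filter (fun i => π i = i), χ i) *
              (∏ i ∈ K.filter (fun i => i < π i),
                ℏ ^ 2 * q i * q (π i) / (q i - q (π i)) ^ 2) else 0 := Finset.sum_comm
      _ = _ := by
          refine Finset.sum_congr rfl fun π _ => ?_
          rw [← Finset.sum_filter]
  rw [hRHS]
  refine Finset.sum_congr rfl fun π hπ => ?_
  simp only [Finset.mem_filter, Finset.mem_univ, true_and] at hπ
  -- notation
  set Fx : Finset (Fin n) := Finset.univ.filter (fun i => π i = i) with hFx
  set T : Finset (Fin n) := Finset.univ.filter (fun i => ¬π i = i) with hT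
  have hcard : Fx.card + T.card = n := by
    rw [hFx, hT, Finset.card_filter_add_card_filter_not, Finset.card_univ,
      Fintype.card_fin]
  have hTsub : ∀ K ∈ (Finset.powersetCard k (Finset.univ : Finset (Fin n))).filter
      (fun K => ∀ i ∉ K, π i = i), T ⊆ K := by
    intro K hK
    obtain ⟨hK1, hK2⟩ := Finset.mem_filter.1 hK
    intro i hi
    by_contra hc
    exact (Finset.mem_filter.1 hi).2 (hK2 i hc)
  have hKcard : ∀ K ∈ (Finset.powersetCard k (Finset.univ : Finset (Fin n))).filter
      (fun K => ∀ i ∉ K, π i = i), K.card = k := by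
    intro K hK
    exact (Finset.mem_powersetCard.1 (Finset.mem_filter.1 hK).1).2
  by_cases hTk : T.card ≤ k
  · -- main case
    have hnk : n - k ≤ Fx.card := by omega
    rw [Finset.prod_X_add_C_coeff Fx χ hnk]
    have hcc : Fx.card - (n - k) = k - T.card := by omega
    rw [hcc, Finset.sum_mul]
    refine (Finset.sum_bij' (fun S _ => S ∪ T) (fun K _ => K \ T) ?_ ?_ ?_ ?_ ?_)
    · -- forward : S ↦ S ∪ T lands in the K-set
      intro S hS
      obtain ⟨hS1, hS2⟩ := Finset.mem_powersetCard.1 hS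
      have hdisj : Disjoint S T := by
        rw [Finset.disjoint_left]
        intro a ha hc
        exact (Finset.mem_filter.1 hc).2 (Finset.mem_filter.1 (hS1 ha)).2
      refine Finset.mem_filter.2 ⟨Finset.mem_powersetCard.2
        ⟨Finset.subset_univ _, ?_⟩, ?_⟩
      · rw [Finset.card_union_of_disjoint hdisj, hS2]
        omega
      · intro i hi
        by_contra hc
        exact hi (Finset.mem_union_right S (Finset.mem_filter.2 ⟨Finset.mem_univ i, hc⟩))
    · -- backward : K ↦ K \ T lands in the S-set
      intro K hK
      refine Finset.mem_powersetCard.2 ⟨?_, ?_⟩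
      · intro i hi
        obtain ⟨hiK, hiT⟩ := Finset.mem_sdiff.1 hi
        refine Finset.mem_filter.2 ⟨Finset.mem_univ i, ?_⟩
        by_contra hc
        exact hiT (Finset.mem_filter.2 ⟨Finset.mem_univ i, hc⟩)
      · rw [Finset.card_sdiff_of_subset (hTsub K hK), hKcard K hK]
    · -- left inverse
      intro S hS
      obtain ⟨hS1, hS2⟩ := Finset.mem_powersetCard.1 hS
      show (S ∪ T) \ T = S
      ext a
      simp only [Finset.mem_sdiff, Finset.mem_union]
      constructor
      · rintro ⟨hi | hi, hniT⟩
        exacts [hi, absurd hi hniT]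
      · intro ha
        exact ⟨Or.inl ha, fun hc => (Finset.mem_filter.1 hc).2
          (Finset.mem_filter.1 (hS1 ha)).2⟩
    · -- right inverse
      intro K hK
      exact Finset.sdiff_union_of_subset (hTsub K hK)
    · -- values
      intro S hS
      obtain ⟨hS1, hS2⟩ := Finset.mem_powersetCard.1 hS
      have hfix : (S ∪ T).filter (fun i => π i = i) = S := by
        ext i
        simp only [Finset.mem_filter, Finset.mem_union]
        constructor
        · rintro ⟨hi | hi, hf⟩
          · exact hi
          · exact absurd hf (Finset.mem_filter.1 hi).2
        · intro hi
          exact ⟨Or.inl hi, (Finset.mem_filter.1 (hS1 hi)).2⟩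
      have hlt : (S ∪ T).filter (fun i => i < π i)
          = Finset.univ.filter (fun i => i < π i) := by
        ext i
        simp only [Finset.mem_filter, Finset.mem_union, Finset.mem_univ, true_and]
        constructor
        · rintro ⟨_, h⟩; exact h
        · intro h
          refine ⟨Or.inr (Finset.mem_filter.2 ⟨Finset.mem_univ i, fun hc => ?_⟩), h⟩
          rw [hc] at h
          exact lt_irrefl i h
      rw [hfix, hlt]
  · -- degenerate case : T.card > k
    push_neg at hTk
    have hdeg : (∏ i ∈ Fx, (Polynomial.X + Polynomial.C (χ i))).natDegree = Fx.card := by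
      rw [Polynomial.natDegree_prod_of_monic Fx _
        (fun i _ => Polynomial.monic_X_add_C (χ i))]
      simp [Polynomial.natDegree_X_add_C]
    have hzero : (∏ i ∈ Fx, (Polynomial.X + Polynomial.C (χ i))).coeff (n - k) = 0 := by
      apply Polynomial.coeff_eq_zero_of_natDegree_lt
      rw [hdeg]
      omega
    rw [hzero, zero_mul]
    symm
    refine Finset.sum_eq_zero fun K hK => ?_
    exfalso
    have h1 : T.card ≤ K.card := Finset.card_le_card (hTsub K hK)
    rw [hKcard K hK] at h1
    omega
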